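/- arXiv:1304.1851 — 7 statements merged into one kernel-verified Lean document; each statement's English description precedes it below -/
import Mathlib

section
/- For δ ∈ (0,1), A ≥ 0, B ≥ 0, define D(N) = N·exp(A(N-1)^{δ-1}N^{-δ} + B/N) and Q(N) = exp(2B/N + A(2N-1-δ)N^{-δ}(N-1)^{δ-2}) for real N > 1, and V(N) = N(N+1)Q(N) - D(N) - D(N)². Then V(N) → (2-δ)A + B as N → ∞. -/
open Filter

/-- `((N-1)/N)^s → 1`, in product form. -/
lemma fhma_aux_ratio (s : ℝ) :
    Tendsto (fun N : ℝ => (N - 1) ^ s * N ^ (-s)) atTop (nhds 1) := by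
  have h1 : Tendsto (fun N : ℝ => (N - 1) / N) atTop (nhds 1) := by
    have h : ∀ᶠ N : ℝ in atTop, 1 - N⁻¹ = (N - 1) / N := by
      filter_upwards [eventually_gt_atTop (0 : ℝ)] with N hN
      field_simp
    have : Tendsto (fun N : ℝ => 1 - N⁻¹) atTop (nhds (1 - 0)) :=
      tendsto_const_nhds.sub tendsto_inv_atTop_zero
    rw [sub_zero] at this
    exact this.congr' h
  have h2 : Tendsto (fun x : ℝ => x ^ s) (nhds 1) (nhds 1) := by
    have := (Real.continuousAt_rpow_const 1 s (Or.inl one_ne_zero)).tendsto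
    simpa [Real.one_rpow] using this
  refine (h2.comp h1).congr' ?_
  filter_upwards [eventually_gt_atTop (1 : ℝ)] with N hN
  have hN0 : (0 : ℝ) < N := lt_trans one_pos hN
  have hN1 : (0 : ℝ) ≤ N - 1 := by linarith
  simp only [Function.comp]
  rw [Real.div_rpow hN1 hN0.le, Real.rpow_neg hN0.le, div_eq_mul_inv]

/-- key combination: `C * ((N-1)^s * N^u) → C * lim (N^(s+u))`. -/
lemma fhma_aux_comb (C s u : ℝ) {l : ℝ}
    (ht : Tendsto (fun N : ℝ => N ^ (s + u)) atTop (nhds l)) :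
    Tendsto (fun N : ℝ => C * ((N - 1) ^ s * N ^ u)) atTop (nhds (C * l)) := by
  have h : Tendsto (fun N : ℝ => C * ((N - 1) ^ s * N ^ (-s) * N ^ (s + u))) atTop
      (nhds (C * (1 * l))) := tendsto_const_nhds.mul ((fhma_aux_ratio s).mul ht)
  rw [one_mul] at h
  refine h.congr' ?_
  filter_upwards [eventually_gt_atTop (1 : ℝ)] with N hN
  have hN0 : (0 : ℝ) < N := lt_trans one_pos hN
  rw [mul_assoc, ← Real.rpow_add hN0, show -s + (s + u) = u by ring]

lemma fhma_aux_zero : Tendsto (fun N : ℝ => N ^ (0:ℝ)) atTop (nhds 1) := by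
  simpa using tendsto_const_nhds (α := ℝ) (f := atTop) (a := (1:ℝ))

lemma fhma_aux_negone : Tendsto (fun N : ℝ => N ^ (-1:ℝ)) atTop (nhds 0) :=
  tendsto_rpow_neg_atTop one_pos

lemma fhma_aux_negtwo : Tendsto (fun N : ℝ => N ^ (-2:ℝ)) atTop (nhds 0) := by
  simpa using tendsto_rpow_neg_atTop (y := 2) two_pos

/-- linearization of exp: if `g → 0` and `p*g → L` then `p*(exp g - 1) → L`. -/
lemma fhma_aux_exp {g p : ℝ → ℝ} {L : ℝ} (hg : Tendsto g atTop (nhds 0))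
    (hpg : Tendsto (fun N => p N * g N) atTop (nhds L)) :
    Tendsto (fun N => p N * (Real.exp (g N) - 1)) atTop (nhds L) := by
  have hgsmall : ∀ᶠ N in atTop, |g N| ≤ 1 := by
    have := hg.eventually (eventually_abs_sub_lt 0 one_pos)
    filter_upwards [this] with N hN
    rw [sub_zero] at hN; exact hN.le
  have h0 : Tendsto (fun N => p N * (Real.exp (g N) - 1 - g N)) atTop (nhds 0) := by
    apply squeeze_zero_norm' (a := fun N => |p N * g N| * |g N|)
    · filter_upwards [hgsmall] with N hN
      calc ‖p N * (Real.exp (g N) - 1 - g N)‖ = |p N| * |Real.exp (g N) - 1 - g N| :=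
            abs_mul _ _
        _ ≤ |p N| * (g N) ^ 2 := by
            gcongr
            exact Real.abs_exp_sub_one_sub_id_le hN
        _ = |p N * g N| * |g N| := by
            rw [abs_mul, ← sq_abs (g N)]; ring
    · have hlim : Tendsto (fun N => |p N * g N| * |g N|) atTop (nhds (|L| * |(0:ℝ)|)) :=
        hpg.abs.mul hg.abs
      simpa using hlim
  have : Tendsto (fun N => p N * g N + p N * (Real.exp (g N) - 1 - g N)) atTop
      (nhds (L + 0)) := hpg.add h0
  rw [add_zero] at this
  exact this.congr (fun N => by ring)

theorem fhma_variance_limit (δ A B : ℝ) (hδ : δ ∈ Set.Ioo (0:ℝ) 1)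
    (hA : 0 ≤ A) (hB : 0 ≤ B)
    (D Q V : ℝ → ℝ)
    (hD : ∀ N : ℝ, 1 < N →
      D N = N * Real.exp (A * (N - 1) ^ (δ - 1) * N ^ (-δ) + B / N))
    (hQ : ∀ N : ℝ, 1 < N →
      Q N = Real.exp (2 * B / N + A * (2 * N - 1 - δ) * N ^ (-δ) * (N - 1) ^ (δ - 2)))
    (hV : ∀ N : ℝ, 1 < N → V N = N * (N + 1) * Q N - D N - (D N) ^ 2) :
    Tendsto V atTop (nhds ((2 - δ) * A + B)) := by
  set f : ℝ → ℝ := fun N => A * (N - 1) ^ (δ - 1) * N ^ (-δ) + B / N with hf_def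
  set c : ℝ → ℝ := fun N => A * (1 - δ) * N ^ (-δ) * (N - 1) ^ (δ - 2) with hc_def
  -- rpow facts on (1, ∞)
  have key1 : ∀ N : ℝ, 1 < N → N * N ^ (-δ) = N ^ (1 - δ) := by
    intro N hN
    have hN0 : (0 : ℝ) < N := lt_trans one_pos hN
    rw [show (1 - δ) = 1 + (-δ) by ring, Real.rpow_add hN0, Real.rpow_one]
  have key2 : ∀ N : ℝ, 1 < N → N * (N * N ^ (-δ)) = N ^ (2 - δ) := by
    intro N hN
    have hN0 : (0 : ℝ) < N := lt_trans one_pos hN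
    rw [key1 N hN, show (2 - δ) = 1 + (1 - δ) by ring, Real.rpow_add hN0, Real.rpow_one]
  -- f → 0
  have hf0 : Tendsto f atTop (nhds 0) := by
    have h1 := fhma_aux_comb A (δ - 1) (-δ) (l := 0)
      (by rw [show δ - 1 + -δ = -1 by ring]; exact fhma_aux_negone)
    have h2 : Tendsto (fun N : ℝ => B * N⁻¹) atTop (nhds (B * 0)) :=
      tendsto_const_nhds.mul tendsto_inv_atTop_zero
    have h := h1.add h2
    rw [mul_zero, mul_zero, add_zero] at h
    refine h.congr (fun N => ?_)
    rw [hf_def]; simp only []; rw [div_eq_mul_inv]; ring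
  -- c → 0
  have hc0 : Tendsto c atTop (nhds 0) := by
    have h1 := fhma_aux_comb (A * (1 - δ)) (δ - 2) (-δ) (l := 0)
      (by rw [show δ - 2 + -δ = -2 by ring]; exact fhma_aux_negtwo)
    rw [mul_zero] at h1
    refine h1.congr (fun N => ?_)
    rw [hc_def]; simp only []; ring
  -- N² c → A(1-δ)
  have hpc : Tendsto (fun N : ℝ => (N * N) * c N) atTop (nhds (A * (1 - δ))) := by
    have h1 := fhma_aux_comb (A * (1 - δ)) (δ - 2) (2 - δ) (l := 1)
      (by rw [show δ - 2 + (2 - δ) = 0 by ring]; exact fhma_aux_zero)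
    rw [mul_one] at h1
    refine h1.congr' ?_
    filter_upwards [eventually_gt_atTop (1 : ℝ)] with N hN
    rw [hc_def]; simp only []
    rw [← key2 N hN]; ring
  -- N (f + c) → A + B
  have hpfc : Tendsto (fun N : ℝ => N * (f N + c N)) atTop (nhds (A + B)) := by
    have h1 := fhma_aux_comb A (δ - 1) (1 - δ) (l := 1)
      (by rw [show δ - 1 + (1 - δ) = 0 by ring]; exact fhma_aux_zero)
    rw [mul_one] at h1
    have h2 := fhma_aux_comb (A * (1 - δ)) (δ - 2) (1 - δ) (l := 0)
      (by rw [show δ - 2 + (1 - δ) = -1 by ring]; exact fhma_aux_negone)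
    rw [mul_zero] at h2
    have hcb : Tendsto (fun _ : ℝ => B) atTop (nhds B) := tendsto_const_nhds
    have h := (h1.add hcb).add h2
    rw [add_zero] at h
    refine h.congr' ?_
    filter_upwards [eventually_gt_atTop (1 : ℝ)] with N hN
    have hN0 : (0 : ℝ) ≠ N := (lt_trans one_pos hN).ne
    rw [hf_def, hc_def]; simp only []
    have hBN : N * (B / N) = B := by field_simp
    rw [show N * (A * (N - 1) ^ (δ - 1) * N ^ (-δ) + B / N +
        A * (1 - δ) * N ^ (-δ) * (N - 1) ^ (δ - 2)) =
        A * ((N - 1) ^ (δ - 1) * (N * N ^ (-δ))) + N * (B / N) +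
        A * (1 - δ) * ((N - 1) ^ (δ - 2) * (N * N ^ (-δ))) from by ring, hBN,
      key1 N hN]
  -- exp limits
  have hef : Tendsto (fun N : ℝ => Real.exp (f N)) atTop (nhds 1) := by
    have := (Real.continuous_exp.tendsto 0).comp hf0
    simpa [Function.comp_def] using this
  have hef2 : Tendsto (fun N : ℝ => Real.exp (f N) * Real.exp (f N)) atTop
      (nhds 1) := by simpa using hef.mul hef
  have hT1 : Tendsto (fun N : ℝ => (N * N) * (Real.exp (c N) - 1)) atTop
      (nhds (A * (1 - δ))) := fhma_aux_exp hc0 hpc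
  have hT2 : Tendsto (fun N : ℝ => N * (Real.exp (f N + c N) - 1)) atTop
      (nhds (A + B)) := by
    have hfc0 : Tendsto (fun N => f N + c N) atTop (nhds 0) := by
      simpa using hf0.add hc0
    exact fhma_aux_exp hfc0 hpfc
  -- total limit of the reorganized expression
  have hW : Tendsto (fun N : ℝ =>
      (Real.exp (f N) * Real.exp (f N)) * ((N * N) * (Real.exp (c N) - 1)) +
      Real.exp (f N) * (N * (Real.exp (f N + c N) - 1))) atTop
      (nhds ((2 - δ) * A + B)) := by
    have h := (hef2.mul hT1).add (hef.mul hT2)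
    rw [one_mul, one_mul] at h
    convert h using 2
    ring
  -- V agrees with W eventually
  refine hW.congr' ?_
  filter_upwards [eventually_gt_atTop (1 : ℝ)] with N hN
  have hN0 : (0 : ℝ) < N := lt_trans one_pos hN
  have hNe : N - 1 ≠ 0 := by
    have : (0 : ℝ) < N - 1 := by linarith
    exact this.ne'
  have hg : 2 * B / N + A * (2 * N - 1 - δ) * N ^ (-δ) * (N - 1) ^ (δ - 2) =
      2 * f N + c N := by
    rw [hf_def, hc_def]; simp only []
    rw [show δ - 1 = (δ - 2) + 1 by ring, Real.rpow_add_one hNe]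
    ring
  have hDN : D N = N * Real.exp (f N) := by rw [hD N hN]
  have hQN : Q N = Real.exp (f N) * Real.exp (f N) * Real.exp (c N) := by
    rw [hQ N hN, hg, two_mul, Real.exp_add, Real.exp_add]
  rw [hV N hN, hDN, hQN, Real.exp_add (f N) (c N)]
  ring
end

section
/- For δ ∈ (0,1), A > 0, B ≥ 0, let p = 1/N with N > 1, define D̃(p) = (1/p)·exp(pA/(1-p)^{1-δ} + B) and Ṽ(p) = (2/p²)·exp((2-p-δp)pA/(1-p)^{2-δ} + 2B) - D̃(p) - D̃(p)². Then Ṽ(1/N)/N² converges, as N → ∞, to the positive constant 2e^{2B} - e^{2B} = e^{2B}, i.e., Ṽ(1/N) = Θ(N²). -/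
open Filter

theorem aloha_variance_quadratic (δ A B : ℝ) (hδ : δ ∈ Set.Ioo (0:ℝ) 1)
    (hA : 0 < A) (hB : 0 ≤ B)
    (D V : ℝ → ℝ)
    (hD : ∀ p : ℝ, 0 < p → p < 1 →
      D p = (1 / p) * Real.exp (p * A / (1 - p) ^ (1 - δ) + B))
    (hV : ∀ p : ℝ, 0 < p → p < 1 →
      V p = (2 / p ^ 2) * Real.exp ((2 - p - δ * p) * p * A / (1 - p) ^ (2 - δ) + 2 * B)
        - D p - (D p) ^ 2) :
    Tendsto (fun N : ℝ => V (1 / N) / N ^ 2) atTop (nhds (Real.exp (2 * B))) := by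
  set F : ℝ → ℝ := fun x =>
    2 * Real.exp ((2 - x - δ * x) * x * A / (1 - x) ^ (2 - δ) + 2 * B)
      - x * Real.exp (x * A / (1 - x) ^ (1 - δ) + B)
      - (Real.exp (x * A / (1 - x) ^ (1 - δ) + B)) ^ 2 with hF
  have h1 : ContinuousAt (fun x : ℝ => (1 - x) ^ (2 - δ)) 0 := by
    apply ContinuousAt.rpow (continuousAt_const.sub continuousAt_id) continuousAt_const
    left; norm_num
  have h2 : ContinuousAt (fun x : ℝ => (1 - x) ^ (1 - δ)) 0 := by
    apply ContinuousAt.rpow (continuousAt_const.sub continuousAt_id) continuousAt_const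
    left; norm_num
  have hne1 : ((1:ℝ) - 0) ^ (2 - δ) ≠ 0 := by
    simp [Real.one_rpow]
  have hne2 : ((1:ℝ) - 0) ^ (1 - δ) ≠ 0 := by
    simp [Real.one_rpow]
  have harg1 : ContinuousAt (fun x : ℝ =>
      (2 - x - δ * x) * x * A / (1 - x) ^ (2 - δ) + 2 * B) 0 := by
    exact (((((continuousAt_const.sub continuousAt_id).sub
      (continuousAt_const.mul continuousAt_id)).mul continuousAt_id).mul
      continuousAt_const).div h1 hne1).add continuousAt_const
  have harg2 : ContinuousAt (fun x : ℝ => x * A / (1 - x) ^ (1 - δ) + B) 0 := by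
    exact ((continuousAt_id.mul continuousAt_const).div h2 hne2).add continuousAt_const
  have hcont : ContinuousAt F 0 := by
    exact ((continuousAt_const.mul (Real.continuous_exp.continuousAt.comp harg1)).sub
      (continuousAt_id.mul (Real.continuous_exp.continuousAt.comp harg2))).sub
      ((Real.continuous_exp.continuousAt.comp harg2).pow 2)
  have hF0 : F 0 = Real.exp (2 * B) := by
    simp only [hF]
    norm_num [Real.one_rpow]
    rw [sq, ← Real.exp_add, two_mul]
    ring
  have htend : Tendsto (fun N : ℝ => F (1 / N)) atTop (nhds (Real.exp (2 * B))) := by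
    rw [← hF0]
    exact hcont.tendsto.comp (by simpa only [← one_div] using (tendsto_inv_atTop_zero : Tendsto (fun N : ℝ => N⁻¹) atTop (nhds 0)))
  apply htend.congr'
  filter_upwards [eventually_gt_atTop 1] with N hN
  have hN0 : (0:ℝ) < N := lt_trans one_pos hN
  have hp0 : 0 < 1 / N := by positivity
  have hp1 : 1 / N < 1 := by
    rw [div_lt_one hN0]; exact hN
  rw [hV _ hp0 hp1, hD _ hp0 hp1]
  simp only [hF]
  have hNne : N ≠ 0 := ne_of_gt hN0
  field_simp
end

section
/- For δ ∈ (0,1), A > 0, B ≥ 0, define f(N) = 1 - (1/N)·(A·(N/(N-1))^{1-δ}·((N-δ)/(N-1)) + B) for real N > 1. Then f is strictly monotonically increasing on (1, ∞), f(N) → -∞ as N → 1+, and f(N) → 1 as N → ∞; hence f has a unique zero N_opt in (1, ∞). -/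
open Filter

private lemma fhma_aux_mono' (δ A B : ℝ) (hδ0 : 0 < δ) (hδ1 : δ < 1) (hA : 0 < A) (hB : 0 ≤ B)
    {x y : ℝ} (hx : 1 < x) (hxy : x < y) :
    1 - (1 / x) * (A * (x / (x - 1)) ^ (1 - δ) * ((x - δ) / (x - 1)) + B)
      < 1 - (1 / y) * (A * (y / (y - 1)) ^ (1 - δ) * ((y - δ) / (y - 1)) + B) := by
  have hy : 1 < y := hx.trans hxy
  have hx0 : (0:ℝ) < x := lt_trans one_pos hx
  have hy0 : (0:ℝ) < y := lt_trans one_pos hy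
  have hx1 : (0:ℝ) < x - 1 := by linarith
  have hy1 : (0:ℝ) < y - 1 := by linarith
  have hbase : y / (y - 1) < x / (x - 1) := by
    rw [div_lt_div_iff₀ hy1 hx1]; nlinarith
  have hbposy : (0:ℝ) < y / (y - 1) := div_pos hy0 hy1
  have hbposx : (0:ℝ) < x / (x - 1) := div_pos hx0 hx1
  have hp : (y / (y - 1)) ^ (1 - δ) < (x / (x - 1)) ^ (1 - δ) :=
    Real.rpow_lt_rpow hbposy.le hbase (by linarith)
  have hpposy : (0:ℝ) < (y / (y - 1)) ^ (1 - δ) := Real.rpow_pos_of_pos hbposy _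
  have hpposx : (0:ℝ) < (x / (x - 1)) ^ (1 - δ) := Real.rpow_pos_of_pos hbposx _
  have hu : (y - δ) / (y * (y - 1)) < (x - δ) / (x * (x - 1)) := by
    rw [div_lt_div_iff₀ (mul_pos hy0 hy1) (mul_pos hx0 hx1)]
    nlinarith [mul_pos (sub_pos.2 hxy) (mul_pos hx1 hy1),
      mul_pos (sub_pos.2 hxy) (mul_pos (sub_pos.2 hδ1) (show (0:ℝ) < x + y - 1 by linarith))]
  have huposy : (0:ℝ) < (y - δ) / (y * (y - 1)) := div_pos (by linarith) (mul_pos hy0 hy1)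
  have hmul : (y / (y - 1)) ^ (1 - δ) * ((y - δ) / (y * (y - 1)))
      < (x / (x - 1)) ^ (1 - δ) * ((x - δ) / (x * (x - 1))) :=
    mul_lt_mul hp hu.le huposy hpposx.le
  have hBdiv : B / y ≤ B / x := by gcongr
  have ey : (1 / y) * (A * (y / (y - 1)) ^ (1 - δ) * ((y - δ) / (y - 1)) + B)
      = A * ((y / (y - 1)) ^ (1 - δ) * ((y - δ) / (y * (y - 1)))) + B / y := by
    field_simp
  have ex : (1 / x) * (A * (x / (x - 1)) ^ (1 - δ) * ((x - δ) / (x - 1)) + B)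
      = A * ((x / (x - 1)) ^ (1 - δ) * ((x - δ) / (x * (x - 1)))) + B / x := by
    field_simp
  rw [ey, ex]
  have := mul_lt_mul_of_pos_left hmul hA
  linarith

private lemma fhma_aux_atBot (δ A B : ℝ) (hδ1 : δ < 1) (hA : 0 < A) (hB : 0 ≤ B) :
    Tendsto (fun N : ℝ => 1 - (1 / N) * (A * (N / (N - 1)) ^ (1 - δ) * ((N - δ) / (N - 1)) + B))
      (nhdsWithin 1 (Set.Ioi 1)) atBot := by
  set L := nhdsWithin (1:ℝ) (Set.Ioi 1) with hL
  have hsub : Tendsto (fun N : ℝ => N - 1) L (nhdsWithin 0 (Set.Ioi 0)) := by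
    apply tendsto_nhdsWithin_of_tendsto_nhds_of_eventually_within
    · have h : Tendsto (fun N : ℝ => N - 1) (nhds 1) (nhds (1 - 1)) :=
        tendsto_id.sub_const 1
      rw [sub_self] at h
      exact h.mono_left nhdsWithin_le_nhds
    · filter_upwards [self_mem_nhdsWithin] with N hN
      simp only [Set.mem_Ioi] at hN ⊢; linarith
  have hinv : Tendsto (fun N : ℝ => (N - 1)⁻¹) L atTop :=
    tendsto_inv_nhdsGT_zero.comp hsub
  have hid : Tendsto (fun N : ℝ => N) L (nhds 1) :=
    tendsto_id.mono_left nhdsWithin_le_nhds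
  have hbase : Tendsto (fun N : ℝ => N / (N - 1)) L atTop := by
    simp only [div_eq_mul_inv]
    exact hid.pos_mul_atTop one_pos hinv
  have hp : Tendsto (fun N : ℝ => (N / (N - 1)) ^ (1 - δ)) L atTop :=
    (tendsto_rpow_atTop (by linarith : (0:ℝ) < 1 - δ)).comp hbase
  have hnum : Tendsto (fun N : ℝ => N - δ) L (nhds (1 - δ)) :=
    (tendsto_id.sub_const δ).mono_left nhdsWithin_le_nhds
  have hq : Tendsto (fun N : ℝ => (N - δ) / (N - 1)) L atTop := by
    simp only [div_eq_mul_inv]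
    exact hnum.pos_mul_atTop (by linarith) hinv
  have hpq : Tendsto (fun N : ℝ => A * (N / (N - 1)) ^ (1 - δ) * ((N - δ) / (N - 1)) + B) L atTop := by
    apply tendsto_atTop_add_const_right
    have := (hp.atTop_mul_atTop₀ hq).const_mul_atTop hA
    simpa [mul_assoc] using this
  have h1N : Tendsto (fun N : ℝ => 1 / N) L (nhds 1) := by
    have h : Tendsto (fun N : ℝ => 1 / N) (nhds (1:ℝ)) (nhds (1/1)) :=
      (tendsto_const_nhds.div tendsto_id one_ne_zero)
    rw [div_one] at h
    exact h.mono_left nhdsWithin_le_nhds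
  have hprod : Tendsto (fun N : ℝ => (1 / N) * (A * (N / (N - 1)) ^ (1 - δ) * ((N - δ) / (N - 1)) + B)) L atTop :=
    h1N.pos_mul_atTop one_pos hpq
  have hneg := tendsto_neg_atTop_atBot.comp hprod
  have h2 := tendsto_atBot_add_const_left L (1:ℝ) hneg
  simpa [sub_eq_add_neg, Function.comp] using h2

private lemma fhma_aux_atTop (δ A B : ℝ) (hδ1 : δ < 1) (hA : 0 < A) (hB : 0 ≤ B) :
    Tendsto (fun N : ℝ => 1 - (1 / N) * (A * (N / (N - 1)) ^ (1 - δ) * ((N - δ) / (N - 1)) + B))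
      atTop (nhds 1) := by
  have hinv : Tendsto (fun N : ℝ => (N - 1)⁻¹) atTop (nhds 0) :=
    tendsto_inv_atTop_zero.comp (tendsto_atTop_add_const_right _ (-1) tendsto_id)
  have hbase : Tendsto (fun N : ℝ => N / (N - 1)) atTop (nhds 1) := by
    have h : Tendsto (fun N : ℝ => 1 + (N - 1)⁻¹) atTop (nhds (1 + 0)) :=
      (tendsto_const_nhds : Tendsto (fun _ : ℝ => (1:ℝ)) atTop (nhds 1)).add hinv
    rw [add_zero] at h
    apply h.congr'
    filter_upwards [eventually_gt_atTop (1:ℝ)] with N hN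
    have h0 : N - 1 ≠ 0 := by linarith
    field_simp
    ring
  have hp : Tendsto (fun N : ℝ => (N / (N - 1)) ^ (1 - δ)) atTop (nhds 1) := by
    have hc := (Real.continuousAt_rpow_const 1 (1 - δ) (Or.inl one_ne_zero)).tendsto
    have := hc.comp hbase
    simpa [Function.comp_def] using this
  have hq : Tendsto (fun N : ℝ => (N - δ) / (N - 1)) atTop (nhds 1) := by
    have h : Tendsto (fun N : ℝ => 1 + (1 - δ) * (N - 1)⁻¹) atTop (nhds (1 + (1 - δ) * 0)) :=
      (tendsto_const_nhds : Tendsto (fun _ : ℝ => (1:ℝ)) atTop (nhds 1)).add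
        ((tendsto_const_nhds : Tendsto (fun _ : ℝ => (1 - δ)) atTop (nhds (1 - δ))).mul hinv)
    rw [mul_zero, add_zero] at h
    apply h.congr'
    filter_upwards [eventually_gt_atTop (1:ℝ)] with N hN
    have h0 : N - 1 ≠ 0 := by linarith
    field_simp
    ring
  have h1N : Tendsto (fun N : ℝ => 1 / N) atTop (nhds 0) := by
    simpa [one_div] using (tendsto_inv_atTop_zero : Tendsto (fun N : ℝ => N⁻¹) atTop (nhds 0))
  have hsum : Tendsto (fun N : ℝ => A * (N / (N - 1)) ^ (1 - δ) * ((N - δ) / (N - 1)) + B)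
      atTop (nhds (A * 1 * 1 + B)) :=
    (((tendsto_const_nhds : Tendsto (fun _ : ℝ => A) atTop (nhds A)).mul hp).mul hq).add
      tendsto_const_nhds
  have hprod := h1N.mul hsum
  rw [zero_mul] at hprod
  have := (tendsto_const_nhds : Tendsto (fun _ : ℝ => (1:ℝ)) atTop (nhds 1)).sub hprod
  simpa using this

private lemma fhma_aux_cont (δ A B : ℝ) {S : Set ℝ} (hS : S ⊆ Set.Ioi 1) :
    ContinuousOn (fun N : ℝ => 1 - (1 / N) * (A * (N / (N - 1)) ^ (1 - δ) * ((N - δ) / (N - 1)) + B)) S := by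
  have hgt : ∀ z ∈ S, 1 < z := fun z hz => hS hz
  have hne0 : ∀ z ∈ S, z ≠ 0 := fun z hz => by have := hgt z hz; positivity
  have hne1 : ∀ z ∈ S, z - 1 ≠ 0 := fun z hz => by have := hgt z hz; intro h; linarith [h]
  have c1 : ContinuousOn (fun N : ℝ => N / (N - 1)) S :=
    continuousOn_id.div ((continuous_sub_right 1).continuousOn) hne1
  have c2 : ContinuousOn (fun N : ℝ => (N / (N - 1)) ^ (1 - δ)) S :=
    c1.rpow_const (fun z hz => Or.inl (by
      have h1 := hgt z hz
      have : (0:ℝ) < z / (z - 1) := div_pos (by linarith) (by linarith)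
      exact ne_of_gt this))
  have c3 : ContinuousOn (fun N : ℝ => (N - δ) / (N - 1)) S :=
    ((continuous_sub_right δ).continuousOn).div ((continuous_sub_right 1).continuousOn) hne1
  exact continuousOn_const.sub
    ((continuousOn_const.div continuousOn_id hne0).mul
      (((continuousOn_const.mul c2).mul c3).add continuousOn_const))

theorem fhma_first_order_condition (δ A B : ℝ) (hδ : δ ∈ Set.Ioo (0:ℝ) 1)
    (hA : 0 < A) (hB : 0 ≤ B)
    (f : ℝ → ℝ)
    (hf : ∀ N : ℝ, 1 < N →
      f N = 1 - (1 / N) * (A * (N / (N - 1)) ^ (1 - δ) * ((N - δ) / (N - 1)) + B)) :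
    StrictMonoOn f (Set.Ioi (1 : ℝ)) ∧
    Tendsto f (nhdsWithin 1 (Set.Ioi 1)) atBot ∧
    Tendsto f atTop (nhds 1) ∧
    ∃! N : ℝ, 1 < N ∧ f N = 0 := by
  obtain ⟨hδ0, hδ1⟩ := hδ
  have hmono : StrictMonoOn f (Set.Ioi (1:ℝ)) := by
    intro x hx y hy hxy
    rw [hf x hx, hf y hy]
    exact fhma_aux_mono' δ A B hδ0 hδ1 hA hB hx hxy
  have hBot : Tendsto f (nhdsWithin 1 (Set.Ioi 1)) atBot := by
    apply (fhma_aux_atBot δ A B hδ1 hA hB).congr'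
    filter_upwards [self_mem_nhdsWithin] with N hN
    exact (hf N hN).symm
  have hTop : Tendsto f atTop (nhds 1) := by
    apply (fhma_aux_atTop δ A B hδ1 hA hB).congr'
    filter_upwards [eventually_gt_atTop (1:ℝ)] with N hN
    exact (hf N hN).symm
  refine ⟨hmono, hBot, hTop, ?_⟩
  -- find a with f a < 0
  obtain ⟨a, ha1, haf⟩ : ∃ a : ℝ, a ∈ Set.Ioi (1:ℝ) ∧ f a < 0 := by
    have h1 : ∀ᶠ N in nhdsWithin (1:ℝ) (Set.Ioi 1), f N < 0 :=
      hBot.eventually (eventually_lt_atBot 0)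
    have h2 : ∀ᶠ N in nhdsWithin (1:ℝ) (Set.Ioi 1), N ∈ Set.Ioi (1:ℝ) :=
      self_mem_nhdsWithin
    exact (h2.and h1).exists
  have ha1' : (1:ℝ) < a := ha1
  -- find b > a with 0 < f b
  obtain ⟨b, hb0, hab⟩ : ∃ b : ℝ, 0 < f b ∧ a < b := by
    have h1 : ∀ᶠ N in atTop, 0 < f N :=
      hTop.eventually (eventually_gt_nhds one_pos)
    exact (h1.and (eventually_gt_atTop a)).exists
  have hb1 : (1:ℝ) < b := ha1'.trans hab
  have hsubset : Set.Icc a b ⊆ Set.Ioi (1:ℝ) := fun z hz => lt_of_lt_of_le ha1' hz.1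
  have hcont : ContinuousOn f (Set.Icc a b) := by
    apply (fhma_aux_cont δ A B hsubset).congr
    intro z hz
    exact hf z (hsubset hz)
  have hivt := intermediate_value_Icc hab.le hcont
  have h0mem : (0:ℝ) ∈ Set.Icc (f a) (f b) := ⟨haf.le, hb0.le⟩
  obtain ⟨c, hcmem, hc0⟩ := hivt h0mem
  have hc1 : (1:ℝ) < c := lt_of_lt_of_le ha1' hcmem.1
  refine ⟨c, ⟨hc1, hc0⟩, ?_⟩
  intro y hy
  exact hmono.injOn (Set.mem_Ioi.2 hy.1) (Set.mem_Ioi.2 hc1) (hy.2.trans hc0.symm)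
end

section
/- Let δ ∈ (0,1), A > 0, B ≥ 0, and suppose N > 1 satisfies N = A·(N/(N-1))^{2-δ}·((N-δ)/N) + B. Then A + B < N < A + B + 2. -/
theorem fhma_Nopt_bounds (δ A B N : ℝ) (hδ : δ ∈ Set.Ioo (0:ℝ) 1)
    (hA : 0 < A) (hB : 0 ≤ B) (hN : 1 < N)
    (hopt : N = A * (N / (N - 1)) ^ (2 - δ) * ((N - δ) / N) + B) :
    A + B < N ∧ N < A + B + 2 := by
  obtain ⟨hδ0, hδ1⟩ := hδ
  have hN1 : (0:ℝ) < N - 1 := by linarith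
  have hN0 : (0:ℝ) < N := by linarith
  have hb : 1 < N / (N - 1) := by
    rw [lt_div_iff₀ hN1]; linarith
  set b := N / (N - 1) with hbdef
  set P := b ^ (2 - δ) with hPdef
  have hP0 : 0 < P := Real.rpow_pos_of_pos (by linarith) _
  have hPb : b < P := by
    have h : b ^ (1:ℝ) < b ^ (2 - δ) :=
      (Real.rpow_lt_rpow_left_iff hb).mpr (by linarith)
    rwa [Real.rpow_one] at h
  have hr0 : 0 < (N - δ) / N := by
    apply div_pos (by linarith) hN0
  have hr1 : (N - δ) / N < 1 := by
    rw [div_lt_one hN0]; linarith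
  have hf1 : 1 < P * ((N - δ) / N) := by
    have h1 : b * ((N - δ) / N) < P * ((N - δ) / N) :=
      mul_lt_mul_of_pos_right hPb hr0
    have h2 : b * ((N - δ) / N) = (N - δ) / (N - 1) := by
      rw [hbdef]; field_simp
    have h3 : 1 < (N - δ) / (N - 1) := by
      rw [lt_div_iff₀ hN1]; linarith
    linarith
  have hkey : A * (P * ((N - δ) / N)) = N - B := by
    rw [hPdef, hbdef]; linarith [hopt]
  have hlow : A + B < N := by
    nlinarith [mul_lt_mul_of_pos_left hf1 hA]
  refine ⟨hlow, ?_⟩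
  rcases le_or_gt N 2 with h2 | h2
  · linarith
  · have hN2 : (0:ℝ) < N - 2 := by linarith
    have hP2 : P < b ^ (2:ℝ) := by
      exact (Real.rpow_lt_rpow_left_iff hb).mpr (by linarith)
    have hb2 : b ^ (2:ℝ) = b ^ 2 := by
      rw [show ((2:ℝ)) = ((2:ℕ):ℝ) by norm_num, Real.rpow_natCast]
    have hb2N : b ^ 2 < N / (N - 2) := by
      rw [hbdef, div_pow, div_lt_div_iff₀ (by positivity) hN2]
      nlinarith
    have hfP : P * ((N - δ) / N) < P :=
      (mul_lt_iff_lt_one_right hP0).mpr hr1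
    have hfub : P * ((N - δ) / N) < N / (N - 2) := by
      rw [hb2] at hP2; linarith
    have hfN : (P * ((N - δ) / N)) * (N - 2) < N := by
      rw [← lt_div_iff₀ hN2]; exact hfub
    nlinarith [mul_lt_mul_of_pos_left hfN hA]
end

section
/- For δ ∈ (0,1), the function l(θ) = θ^{δ-1}(1+θ)ln(1+θ) is strictly increasing on (0, ∞). -/
theorem l_strict_mono (δ : ℝ) (hδ : δ ∈ Set.Ioo (0:ℝ) 1) :
    StrictMonoOn (fun θ : ℝ => θ ^ (δ - 1) * (1 + θ) * Real.log (1 + θ))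
      (Set.Ioi (0 : ℝ)) := by
  obtain ⟨hδ0, hδ1⟩ := hδ
  have key : ∀ x ∈ Set.Ioi (0:ℝ),
      HasDerivAt (fun θ : ℝ => θ ^ (δ - 1) * (1 + θ) * Real.log (1 + θ))
        (((δ - 1) * x ^ (δ - 1 - 1) * (1 + x) + x ^ (δ - 1) * 1) * Real.log (1 + x)
          + x ^ (δ - 1) * (1 + x) * (1 / (1 + x))) x := by
    intro x hx
    have hx0 : (0:ℝ) < x := hx
    have h1 : HasDerivAt (fun θ : ℝ => θ ^ (δ - 1)) ((δ - 1) * x ^ (δ - 1 - 1)) x :=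
      Real.hasDerivAt_rpow_const (Or.inl hx0.ne')
    have h2 : HasDerivAt (fun θ : ℝ => (1:ℝ) + θ) 1 x := by
      simpa using (hasDerivAt_id x).const_add (1:ℝ)
    have h3 : HasDerivAt (fun θ : ℝ => Real.log (1 + θ)) (1 / (1 + x)) x := by
      have := h2.log (by positivity)
      simpa [one_div] using this
    exact (h1.mul h2).mul h3
  have hpos : ∀ x ∈ Set.Ioi (0:ℝ),
      0 < ((δ - 1) * x ^ (δ - 1 - 1) * (1 + x) + x ^ (δ - 1) * 1) * Real.log (1 + x)
          + x ^ (δ - 1) * (1 + x) * (1 / (1 + x)) := by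
    intro x hx
    have hx0 : (0:ℝ) < x := hx
    have hx1 : (0:ℝ) < 1 + x := by positivity
    set a := x ^ (δ - 1 - 1) with ha_def
    set b := x ^ (δ - 1) with hb_def
    have ha : 0 < a := Real.rpow_pos_of_pos hx0 _
    have hb : 0 < b := Real.rpow_pos_of_pos hx0 _
    have hab : a * x = b := by
      rw [ha_def, hb_def, ← Real.rpow_add_one hx0.ne' (δ - 1 - 1)]
      ring_nf
    set L := Real.log (1 + x) with hL_def
    have hL : 0 < L := Real.log_pos (by linarith)
    have hLx : L < x := by
      have := Real.log_lt_sub_one_of_pos hx1 (by linarith)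
      linarith [this]
    have hsimp : x ^ (δ - 1) * (1 + x) * (1 / (1 + x)) = b := by
      rw [← hb_def]
      field_simp
    rw [hsimp]
    have hexp : ((δ - 1) * a * (1 + x) + b * 1) * L = (δ - 1) * a * L + ((δ - 1) * b + b) * L := by
      have : a * (1 + x) = a + b := by rw [← hab]; ring
      rw [show (δ - 1) * a * (1 + x) = (δ - 1) * (a * (1 + x)) by ring, this]
      ring
    rw [hexp]
    nlinarith [mul_pos (mul_pos (sub_pos.mpr hδ1) ha) (sub_pos.mpr hLx),
      mul_pos (mul_pos hδ0 hb) hL, mul_pos hδ0 hb]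
  have hcont : ContinuousOn (fun θ : ℝ => θ ^ (δ - 1) * (1 + θ) * Real.log (1 + θ))
      (Set.Ioi (0:ℝ)) := fun x hx => (key x hx).continuousAt.continuousWithinAt
  refine strictMonoOn_of_deriv_pos (convex_Ioi 0) hcont ?_
  intro x hx
  rw [interior_Ioi] at hx
  rw [(key x hx).deriv]
  exact hpos x hx
end

section
/- Let δ ∈ (0,1) and b_0 > 0, and suppose θ > 0 satisfies b_0 = 1/(θ^{δ-1}(1+θ)ln(1+θ)), i.e., θ^{δ-1}(1+θ)ln(1+θ) = 1/b_0. Then b_0^{-1/(δ+1)} - 1 < θ < b_0^{-1/δ}. -/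
theorem theta_opt_bounds (δ b₀ θ : ℝ) (hδ : δ ∈ Set.Ioo (0:ℝ) 1)
    (hb : 0 < b₀) (hθ : 0 < θ)
    (hopt : θ ^ (δ - 1) * (1 + θ) * Real.log (1 + θ) = 1 / b₀) :
    b₀ ^ (-(1 / (δ + 1))) - 1 < θ ∧ θ < b₀ ^ (-(1 / δ)) := by
  obtain ⟨hδ0, hδ1⟩ := hδ
  have h1θ : (0:ℝ) < 1 + θ := by linarith
  have hpow : (0:ℝ) < θ ^ (δ - 1) := Real.rpow_pos_of_pos hθ _
  -- log bounds
  have hlogub : Real.log (1 + θ) < θ := by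
    have := Real.log_lt_sub_one_of_pos h1θ (by linarith)
    linarith
  have hloglb : θ / (1 + θ) < Real.log (1 + θ) := by
    have h := Real.log_lt_sub_one_of_pos (x := (1 + θ)⁻¹) (by positivity)
      (by
        intro h
        have : (1:ℝ) + θ = 1 := by
          field_simp at h
          linarith
        linarith)
    rw [Real.log_inv] at h
    have : (1 + θ)⁻¹ = 1 - θ / (1 + θ) := by field_simp; ring
    rw [this] at h
    linarith
  have hmul : θ ^ (δ - 1) * θ = θ ^ δ := by
    rw [← Real.rpow_add_one hθ.ne']; ring_nf
  -- lower bound on 1/b₀ : θ^δ < 1/b₀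
  have hA : θ ^ δ < 1 / b₀ := by
    have : θ ^ (δ - 1) * (1 + θ) * (θ / (1 + θ)) < θ ^ (δ - 1) * (1 + θ) * Real.log (1 + θ) := by
      apply mul_lt_mul_of_pos_left hloglb (by positivity)
    rw [hopt] at this
    calc θ ^ δ = θ ^ (δ - 1) * (1 + θ) * (θ / (1 + θ)) := by
          rw [← hmul]; field_simp
      _ < 1 / b₀ := this
  -- upper bound on 1/b₀ : 1/b₀ < (1+θ)^(δ+1)
  have hB : 1 / b₀ < (1 + θ) ^ (δ + 1) := by
    have h1 : 1 / b₀ < θ ^ (δ - 1) * (1 + θ) * θ := by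
      rw [← hopt]
      exact mul_lt_mul_of_pos_left hlogub (by positivity)
    have h2 : θ ^ (δ - 1) * (1 + θ) * θ = θ ^ δ * (1 + θ) := by
      rw [← hmul]; ring
    have h3 : θ ^ δ ≤ (1 + θ) ^ δ := Real.rpow_le_rpow hθ.le (by linarith) hδ0.le
    have h4 : (1 + θ) ^ δ * (1 + θ) = (1 + θ) ^ (δ + 1) :=
      (Real.rpow_add_one h1θ.ne' δ).symm
    calc 1 / b₀ < θ ^ δ * (1 + θ) := by rw [← h2]; exact h1
      _ ≤ (1 + θ) ^ δ * (1 + θ) := by nlinarith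
      _ = (1 + θ) ^ (δ + 1) := h4
  constructor
  · -- b₀^(-(1/(δ+1))) - 1 < θ
    have hz : (0:ℝ) < 1 / (δ + 1) := by positivity
    have := Real.rpow_lt_rpow (by positivity) hB hz
    have hL : (1 / b₀) ^ (1 / (δ + 1)) = b₀ ^ (-(1 / (δ + 1))) := by
      rw [one_div b₀, ← Real.rpow_neg_one b₀, ← Real.rpow_mul hb.le]
      norm_num
    have hR : ((1 + θ) ^ (δ + 1)) ^ (1 / (δ + 1)) = 1 + θ := by
      rw [← Real.rpow_mul h1θ.le]
      rw [mul_one_div, div_self (by positivity : δ + 1 ≠ 0), Real.rpow_one]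
    rw [hL, hR] at this
    linarith
  · -- θ < b₀^(-(1/δ))
    have hz : (0:ℝ) < 1 / δ := by positivity
    have := Real.rpow_lt_rpow (by positivity) hA hz
    have hL : (θ ^ δ) ^ (1 / δ) = θ := by
      rw [← Real.rpow_mul hθ.le, mul_one_div, div_self hδ0.ne', Real.rpow_one]
    have hR : (1 / b₀) ^ (1 / δ) = b₀ ^ (-(1 / δ)) := by
      rw [one_div b₀, ← Real.rpow_neg_one b₀, ← Real.rpow_mul hb.le]
      norm_num
    rw [hL, hR] at this
    exact this
end

section
/- For δ ∈ (0,1), N > 1 real, and θ, r_0, α > 0 with δ = d/α and d ≥ 1, the integral d·∫_0^∞ (1 - N²(1+θ r_0^α r^{-α})²/(N + (N-1)θ r_0^α r^{-α})²)·r^{d-1} dr equals -r_0^d θ^δ C(δ)(2N-1-δ)·N^{-δ}(N-1)^{δ-2}, where C(δ) = Γ(1+δ)Γ(1-δ). -/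
open Real MeasureTheory Set

lemma beta_integrableOn {a b : ℝ} (ha : 0 < a) (hb : 0 < b) :
    IntegrableOn (fun y : ℝ => y ^ (a - 1) * (1 - y) ^ (b - 1)) (Ioo 0 1) := by
  have hc : IntervalIntegrable
      (fun x => (x : ℂ) ^ ((a : ℂ) - 1) * (1 - (x : ℂ)) ^ ((b : ℂ) - 1) : ℝ → ℂ) volume 0 1 := by
    exact Complex.betaIntegral_convergent (by simpa using ha) (by simpa using hb)
  have hnorm := hc.norm
  rw [intervalIntegrable_iff_integrableOn_Ioc_of_le zero_le_one] at hnorm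
  refine (hnorm.mono_set Ioo_subset_Ioc_self).congr_fun ?_ measurableSet_Ioo
  intro x hx
  obtain ⟨hx0, hx1⟩ := hx
  have h1 : (0:ℝ) < 1 - x := by linarith
  simp only [norm_mul]
  have e1 : (1 - (x:ℂ)) = ((1 - x : ℝ) : ℂ) := by push_cast; ring
  rw [e1,
    Complex.norm_cpow_eq_rpow_re_of_pos hx0, Complex.norm_cpow_eq_rpow_re_of_pos h1]
  norm_num

lemma beta_integral_Ioo {a b : ℝ} (ha : 0 < a) (hb : 0 < b) :
    ∫ y in Ioo (0:ℝ) 1, y ^ (a - 1) * (1 - y) ^ (b - 1) =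
      Real.Gamma a * Real.Gamma b / Real.Gamma (a + b) := by
  have key : Complex.Gamma a * Complex.Gamma b =
      Complex.Gamma (a + b) * Complex.betaIntegral a b :=
    Complex.Gamma_mul_Gamma_eq_betaIntegral (by simpa using ha) (by simpa using hb)
  have hbeta : Complex.betaIntegral (a : ℂ) (b : ℂ) =
      ((∫ y in Ioo (0:ℝ) 1, y ^ (a - 1) * (1 - y) ^ (b - 1) : ℝ) : ℂ) := by
    rw [Complex.betaIntegral, intervalIntegral.integral_of_le zero_le_one,
      MeasureTheory.integral_Ioc_eq_integral_Ioo]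
    rw [show (∫ t in Ioo (0:ℝ) 1, (t : ℂ) ^ ((a:ℂ) - 1) * (1 - (t:ℂ)) ^ ((b:ℂ) - 1)) =
        ∫ t in Ioo (0:ℝ) 1, ((t ^ (a - 1) * (1 - t) ^ (b - 1) : ℝ) : ℂ) from ?_]
    · exact integral_ofReal
    refine setIntegral_congr_fun measurableSet_Ioo ?_
    intro x hx
    obtain ⟨hx0, hx1⟩ := hx
    have h1 : (0:ℝ) < 1 - x := by linarith
    simp only [Complex.ofReal_mul]
    rw [Complex.ofReal_cpow hx0.le, Complex.ofReal_cpow h1.le]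
    push_cast
    ring_nf
  have hGab : Real.Gamma (a + b) ≠ 0 := (Real.Gamma_pos_of_pos (by linarith)).ne'
  rw [hbeta] at key
  rw [← Complex.ofReal_add, Complex.Gamma_ofReal, Complex.Gamma_ofReal, Complex.Gamma_ofReal] at key
  have := Complex.ofReal_injective (by push_cast at key ⊢; linear_combination key : 
    ((Real.Gamma a * Real.Gamma b : ℝ) : ℂ) = ((Real.Gamma (a+b) * ∫ y in Ioo (0:ℝ) 1, y ^ (a - 1) * (1 - y) ^ (b - 1) : ℝ) : ℂ))
  field_simp
  linarith [this]

set_option maxHeartbeats 1600000 in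
theorem pgfl_second_moment_integral (d : ℕ) (hd : 1 ≤ d)
    (α δ θ r₀ N : ℝ) (hα : 0 < α) (hθ : 0 < θ) (hr : 0 < r₀) (hN : 1 < N)
    (hδ : δ = (d : ℝ) / α) (hδ0 : 0 < δ) (hδ1 : δ < 1) :
    (d : ℝ) * ∫ r in Set.Ioi (0 : ℝ),
        (1 - N ^ 2 * (1 + θ * r₀ ^ α * r ^ (-α)) ^ 2 /
          (N + (N - 1) * θ * r₀ ^ α * r ^ (-α)) ^ 2) * r ^ ((d : ℝ) - 1) =
      -(r₀ ^ (d : ℝ) * θ ^ δ * (Real.Gamma (1 + δ) * Real.Gamma (1 - δ)) *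
        (2 * N - 1 - δ) * N ^ (-δ) * (N - 1) ^ (δ - 2)) := by
  have hN0 : (0:ℝ) < N := by linarith
  have hN1 : (0:ℝ) < N - 1 := by linarith
  have ha : (0:ℝ) < θ * r₀ ^ α := by positivity
  set G : ℝ → ℝ := fun r =>
      (1 - N ^ 2 * (1 + θ * r₀ ^ α * r ^ (-α)) ^ 2 /
        (N + (N - 1) * θ * r₀ ^ α * r ^ (-α)) ^ 2) * r ^ ((d : ℝ) - 1) with hG_def
  have hbase : (0:ℝ) < θ * r₀ ^ α * (N - 1) / N := by positivity
  set c : ℝ := (θ * r₀ ^ α * (N - 1) / N) ^ α⁻¹ with hc_def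
  have hc : 0 < c := Real.rpow_pos_of_pos hbase _
  set f : ℝ → ℝ := fun y => c * (y / (1 - y)) ^ α⁻¹ with hf_def
  set F' : ℝ → ℝ := fun y => c * α⁻¹ * (y / (1 - y)) ^ (α⁻¹ - 1) / (1 - y) ^ 2 with hF'_def
  -- basic facts
  have hαne : α ≠ 0 := hα.ne'
  -- derivative
  have hder : ∀ y ∈ Ioo (0:ℝ) 1, HasDerivWithinAt f (F' y) (Ioo (0:ℝ) 1) y := by
    intro y hy
    obtain ⟨hy0, hy1⟩ := hy
    have h1y : (0:ℝ) < 1 - y := by linarith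
    have hu : (0:ℝ) < y / (1 - y) := by positivity
    have hdu : HasDerivAt (fun y : ℝ => y / (1 - y))
        ((1 * (1 - y) - y * (0 - 1)) / (1 - y) ^ 2) y := by
      exact (hasDerivAt_id y).div ((hasDerivAt_const y (1:ℝ)).sub (hasDerivAt_id y)) h1y.ne'
    have hdr := (hdu.rpow_const (p := α⁻¹) (Or.inl hu.ne')).const_mul c
    have h2 : c * ((1 * (1 - y) - y * (0 - 1)) / (1 - y) ^ 2 * α⁻¹ * (y / (1 - y)) ^ (α⁻¹ - 1))
        = F' y := by rw [hF'_def]; ring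
    exact (h2 ▸ hdr).hasDerivWithinAt
  -- injectivity
  have hinj : InjOn f (Ioo (0:ℝ) 1) := by
    intro y1 hy1 y2 hy2 heq
    obtain ⟨h10, h11⟩ := hy1
    obtain ⟨h20, h21⟩ := hy2
    have h1y1 : (0:ℝ) < 1 - y1 := by linarith
    have h1y2 : (0:ℝ) < 1 - y2 := by linarith
    have hu1 : (0:ℝ) < y1 / (1 - y1) := by positivity
    have hu2 : (0:ℝ) < y2 / (1 - y2) := by positivity
    have h2 : (y1 / (1 - y1)) ^ α⁻¹ = (y2 / (1 - y2)) ^ α⁻¹ :=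
      mul_left_cancel₀ hc.ne' heq
    have h3 : y1 / (1 - y1) = y2 / (1 - y2) := by
      have := congrArg (fun z : ℝ => z ^ α) h2
      simpa [Real.rpow_inv_rpow hu1.le hαne, Real.rpow_inv_rpow hu2.le hαne] using this
    have h4 : y1 * (1 - y2) = y2 * (1 - y1) := by
      field_simp at h3
      linarith [h3]
    nlinarith
  -- image
  have himg : f '' Ioo (0:ℝ) 1 = Ioi (0:ℝ) := by
    ext z
    constructor
    · rintro ⟨y, ⟨hy0, hy1⟩, rfl⟩
      have h1y : (0:ℝ) < 1 - y := by linarith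
      have : (0:ℝ) < y / (1 - y) := by positivity
      exact mul_pos hc (Real.rpow_pos_of_pos this _)
    · intro hz
      have hz0 : (0:ℝ) < z := hz
      set w : ℝ := (z / c) ^ α with hw_def
      have hw : (0:ℝ) < w := Real.rpow_pos_of_pos (by positivity) _
      refine ⟨w / (1 + w), ⟨by positivity, by
        rw [div_lt_one (by positivity)]; linarith⟩, ?_⟩
      have h1 : 1 - w / (1 + w) = 1 / (1 + w) := by field_simp; ring
      have h2 : w / (1 + w) / (1 - w / (1 + w)) = w := by
        rw [h1]; field_simp
      simp only [hf_def, h2]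
      rw [hw_def]
      rw [Real.rpow_rpow_inv (by positivity) hαne]
      field_simp
  -- change of variables
  have hchg : (∫ r in Set.Ioi (0:ℝ), G r) = ∫ y in Ioo (0:ℝ) 1, |F' y| • G (f y) := by
    rw [← himg]
    exact integral_image_eq_integral_abs_deriv_smul measurableSet_Ioo hder hinj G
  -- pointwise evaluation
  have hpt : ∀ y ∈ Ioo (0:ℝ) 1, |F' y| • G (f y) =
      (-(c ^ (d:ℝ) * α⁻¹ / (N - 1) ^ 2)) *
        ((2 * N - 1) * (y ^ (δ - 1) * (1 - y) ^ ((1 - δ) - 1)) -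
          y ^ ((1 + δ) - 1) * (1 - y) ^ ((1 - δ) - 1)) := by
    intro y hy
    obtain ⟨hy0, hy1⟩ := hy
    have h1y : (0:ℝ) < 1 - y := by linarith
    have hu : (0:ℝ) < y / (1 - y) := by positivity
    have hA : (0:ℝ) < y ^ δ := Real.rpow_pos_of_pos hy0 _
    have hB : (0:ℝ) < (1 - y) ^ δ := Real.rpow_pos_of_pos h1y _
    have hF'pos : 0 < F' y := by
      rw [hF'_def]
      have := Real.rpow_pos_of_pos hu (α⁻¹ - 1)
      positivity
    -- the substituted interference term
    have hT : θ * r₀ ^ α * (f y) ^ (-α) = N * (1 - y) / ((N - 1) * y) := by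
      have hmul : (f y) ^ (-α) = c ^ (-α) * ((y / (1 - y)) ^ α⁻¹) ^ (-α) := by
        rw [hf_def]
        exact Real.mul_rpow hc.le (Real.rpow_nonneg hu.le _)
      have h1 : ((y / (1 - y)) ^ α⁻¹) ^ (-α) = (y / (1 - y))⁻¹ := by
        rw [← Real.rpow_mul hu.le]
        rw [show α⁻¹ * (-α) = (-1:ℝ) by field_simp, Real.rpow_neg_one]
      have h2 : c ^ (-α) = (θ * r₀ ^ α * (N - 1) / N)⁻¹ := by
        rw [hc_def, ← Real.rpow_mul hbase.le]
        rw [show α⁻¹ * (-α) = (-1:ℝ) by field_simp, Real.rpow_neg_one]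
      rw [hmul, h1, h2, inv_div, inv_div]
      field_simp
    -- the bracket
    have hbr : (1 - N ^ 2 * (1 + θ * r₀ ^ α * (f y) ^ (-α)) ^ 2 /
        (N + (N - 1) * θ * r₀ ^ α * (f y) ^ (-α)) ^ 2) =
        (y - 1) * (2 * N - 1 - y) / (N - 1) ^ 2 := by
      have h2 : (N - 1) * θ * r₀ ^ α * (f y) ^ (-α)
          = (N - 1) * (θ * r₀ ^ α * (f y) ^ (-α)) := by ring
      rw [h2, hT]
      have hden : N + (N - 1) * (N * (1 - y) / ((N - 1) * y)) = N / y := by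
        field_simp; ring
      rw [hden]
      field_simp
      ring
    -- power bookkeeping
    set P : ℝ := (y / (1 - y)) ^ (α⁻¹ * ((d:ℝ) - 1)) with hP_def
    have hPpos : 0 < P := Real.rpow_pos_of_pos hu _
    have hPQ : P * (y / (1 - y)) ^ (α⁻¹ - 1) = (y ^ δ / (1 - y) ^ δ) * ((1 - y) / y) := by
      rw [hP_def, ← Real.rpow_add hu]
      have hexp : α⁻¹ * ((d:ℝ) - 1) + (α⁻¹ - 1) = δ - 1 := by
        rw [hδ]; field_simp; ring
      rw [hexp, show δ - 1 = δ + (-1:ℝ) by ring, Real.rpow_add hu, Real.rpow_neg_one,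
        Real.div_rpow hy0.le h1y.le]
      rw [inv_div]
    have hfd : (f y) ^ ((d:ℝ) - 1) = (c ^ (d:ℝ) / c) * P := by
      rw [hf_def, hP_def]
      rw [Real.mul_rpow hc.le (Real.rpow_nonneg hu.le _), ← Real.rpow_mul hu.le]
      congr 1
      rw [show (d:ℝ) - 1 = (d:ℝ) + (-1:ℝ) by ring, Real.rpow_add hc, Real.rpow_neg_one]
      ring
    -- rhs exponent normalization
    have e1 : y ^ (δ - 1) = y ^ δ / y := by
      rw [show δ - 1 = δ + (-1:ℝ) by ring, Real.rpow_add hy0, Real.rpow_neg_one]; ring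
    have e2 : (1 - y) ^ ((1 - δ) - 1) = ((1 - y) ^ δ)⁻¹ := by
      rw [show (1 - δ) - 1 = -δ by ring, Real.rpow_neg h1y.le]
    have e3 : y ^ ((1 + δ) - 1) = y ^ δ := by norm_num
    have hQval : (y / (1 - y)) ^ (α⁻¹ - 1) = (y ^ δ / (1 - y) ^ δ) * ((1 - y) / y) / P := by
      rw [← hPQ]
      field_simp [hPpos.ne']
    rw [smul_eq_mul, abs_of_pos hF'pos]
    simp only [hG_def, hF'_def]
    rw [hbr, hfd, e1, e2, e3, hQval]
    field_simp
    ring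
  -- final computation
  have hd0 : (0:ℝ) < (d:ℝ) := by exact_mod_cast hd
  have h1δ : (0:ℝ) < 1 - δ := by linarith
  have h1δ' : (0:ℝ) < 1 + δ := by linarith
  have i1 : IntegrableOn (fun y : ℝ => y ^ (δ - 1) * (1 - y) ^ ((1 - δ) - 1)) (Ioo 0 1) :=
    beta_integrableOn hδ0 h1δ
  have i2 : IntegrableOn (fun y : ℝ => y ^ ((1 + δ) - 1) * (1 - y) ^ ((1 - δ) - 1)) (Ioo 0 1) :=
    beta_integrableOn h1δ' h1δ
  rw [hchg, setIntegral_congr_fun measurableSet_Ioo hpt, MeasureTheory.integral_const_mul (μ := volume.restrict (Ioo 0 1)) _ _,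
    integral_sub (i1.const_mul (2 * N - 1)) i2,
    MeasureTheory.integral_const_mul (μ := volume.restrict (Ioo 0 1)) _ _, beta_integral_Ioo hδ0 h1δ, beta_integral_Ioo h1δ' h1δ,
    show δ + (1 - δ) = 1 by ring, show (1 + δ) + (1 - δ) = 2 by ring,
    Real.Gamma_one, Real.Gamma_two]
  have hΓ : Real.Gamma (1 + δ) = δ * Real.Gamma δ := by
    rw [add_comm, Real.Gamma_add_one hδ0.ne']
  have hαinv : α⁻¹ = δ / (d:ℝ) := by rw [hδ]; field_simp
  have hcd2 : c ^ (d:ℝ) = θ ^ δ * r₀ ^ (d:ℝ) * ((N - 1) ^ δ / N ^ δ) := by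
    rw [hc_def, ← Real.rpow_mul hbase.le,
      show α⁻¹ * (d:ℝ) = δ by rw [hαinv]; field_simp,
      Real.div_rpow (by positivity) hN0.le, Real.mul_rpow ha.le hN1.le,
      Real.mul_rpow hθ.le (by positivity), ← Real.rpow_mul hr.le,
      show α * δ = (d:ℝ) by rw [hδ]; field_simp]
    ring
  have hNneg : N ^ (-δ) = (N ^ δ)⁻¹ := Real.rpow_neg hN0.le δ
  have hsub : (N - 1) ^ (δ - 2) = (N - 1) ^ δ / (N - 1) ^ 2 := by
    rw [eq_div_iff (by positivity), ← Real.rpow_natCast (N - 1) 2, ← Real.rpow_add hN1]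
    norm_num
  rw [hΓ, hcd2, hNneg, hsub, hαinv]
  have hNd : (0:ℝ) < N ^ δ := Real.rpow_pos_of_pos hN0 δ
  field_simp
end
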